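/- For all natural numbers j and k, the matrix element of the position operator in the Hermite basis is ∫_ℝ x·φ_j(x)·φ_k(x) dx = √((k+1)/2) if j = k+1, √(k/2) if j = k−1 (with k ≥ 1), and 0 otherwise. -/

import Mathlib

open MeasureTheory

/-- The `k`-th physicists' Hermite polynomial. -/
noncomputable def hermitePoly : ℕ → ℝ → ℝ
  | 0, _ => 1
  | 1, x => 2 * x
  | k + 2, x => 2 * x * hermitePoly (k + 1) x - 2 * (k + 1) * hermitePoly k x

/-- The `k`-th Hermite function φ_k(x) = π^(−1/4)·(2^k·k!)^(−1/2)·H_k(x)·e^(−x²/2). -/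
noncomputable def hermiteFun (k : ℕ) (x : ℝ) : ℝ :=
  Real.pi ^ (-(1 / 4 : ℝ)) * (Real.sqrt (2 ^ k * Nat.factorial k))⁻¹ *
    hermitePoly k x * Real.exp (-x ^ 2 / 2)

lemma hermitePoly_recur (k : ℕ) (x : ℝ) :
    hermitePoly (k + 1) x = 2 * x * hermitePoly k x - 2 * (k : ℝ) * hermitePoly (k - 1) x := by
  match k with
  | 0 => simp [hermitePoly]
  | m + 1 => simp [hermitePoly]

lemma exists_poly (k : ℕ) : ∃ P : Polynomial ℝ, ∀ x, hermitePoly k x = Polynomial.eval x P := by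
  induction k using Nat.strong_induction_on with
  | _ k ih =>
    match k with
    | 0 => exact ⟨1, by simp [hermitePoly]⟩
    | 1 => exact ⟨Polynomial.C 2 * Polynomial.X, by simp [hermitePoly]⟩
    | m + 2 =>
      obtain ⟨P1, hP1⟩ := ih (m + 1) (by omega)
      obtain ⟨P0, hP0⟩ := ih m (by omega)
      refine ⟨Polynomial.C 2 * Polynomial.X * P1 - Polynomial.C (2 * ((m : ℝ) + 1)) * P0, fun x => ?_⟩
      simp [hermitePoly, ← hP1, ← hP0]

lemma hasDerivAt_hermitePoly (k : ℕ) (x : ℝ) :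
    HasDerivAt (hermitePoly k) (2 * (k : ℝ) * hermitePoly (k - 1) x) x := by
  induction k using Nat.strong_induction_on generalizing x with
  | _ k ih =>
    match k with
    | 0 =>
      simp only [Nat.cast_zero]
      have : hermitePoly 0 = fun _ : ℝ => (1 : ℝ) := rfl
      rw [this]
      simpa using hasDerivAt_const x (1 : ℝ)
    | 1 =>
      have : hermitePoly 1 = fun y : ℝ => 2 * y := rfl
      rw [this]
      have := (hasDerivAt_id x).const_mul (2 : ℝ)
      simpa [hermitePoly] using this
    | m + 2 =>
      have h1 := ih (m + 1) (by omega) (x := x)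
      have h0 := ih m (by omega) (x := x)
      have ha : HasDerivAt (fun y : ℝ => 2 * y) 2 x := by
        simpa using (hasDerivAt_id x).const_mul (2 : ℝ)
      have hb := ha.mul h1
      have hc := h0.const_mul (2 * ((m : ℝ) + 1))
      have hfun : hermitePoly (m + 2) =
          fun y => (2 * y) * hermitePoly (m + 1) y - 2 * ((m : ℝ) + 1) * hermitePoly m y := by
        funext y; simp [hermitePoly]
      rw [hfun]
      have hd := hb.sub hc
      convert hd using 1
      · rfl
      · rfl
      · rfl
      have hr := hermitePoly_recur m x
      rw [show m + 2 - 1 = m + 1 by omega, show m + 1 - 1 = m by omega]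
      push_cast
      nlinarith [hr]

lemma integrable_pow_gauss (n : ℕ) :
    Integrable fun x : ℝ => x ^ n * Real.exp (-x ^ 2) := by
  have h := integrable_rpow_mul_exp_neg_mul_sq (b := 1) one_pos
    (s := (n : ℝ)) (lt_of_lt_of_le neg_one_lt_zero (Nat.cast_nonneg n))
  simpa [Real.rpow_natCast] using h

lemma integrable_pg (P : Polynomial ℝ) :
    Integrable fun x : ℝ => Polynomial.eval x P * Real.exp (-x ^ 2) := by
  induction P using Polynomial.induction_on' with
  | add p q hp hq => simpa [add_mul] using hp.fun_add hq
  | monomial n c =>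
    have := (integrable_pow_gauss n).const_mul c
    simpa [Polynomial.eval_monomial, mul_assoc] using this

lemma integrable_hh (j k : ℕ) :
    Integrable fun x : ℝ => hermitePoly j x * hermitePoly k x * Real.exp (-x ^ 2) := by
  obtain ⟨Pj, hPj⟩ := exists_poly j
  obtain ⟨Pk, hPk⟩ := exists_poly k
  have := integrable_pg (Pj * Pk)
  simpa [Polynomial.eval_mul, ← hPj, ← hPk] using this

lemma integrable_xhh (j k : ℕ) :
    Integrable fun x : ℝ => x * hermitePoly j x * hermitePoly k x * Real.exp (-x ^ 2) := by
  obtain ⟨Pj, hPj⟩ := exists_poly j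
  obtain ⟨Pk, hPk⟩ := exists_poly k
  have := integrable_pg (Polynomial.X * Pj * Pk)
  simpa [Polynomial.eval_mul, ← hPj, ← hPk] using this

noncomputable def G (j k : ℕ) : ℝ :=
  ∫ x : ℝ, hermitePoly j x * hermitePoly k x * Real.exp (-x ^ 2)

noncomputable def Xl (j k : ℕ) : ℝ :=
  ∫ x : ℝ, x * hermitePoly j x * hermitePoly k x * Real.exp (-x ^ 2)

lemma G_symm (j k : ℕ) : G j k = G k j := by
  unfold G; congr 1; funext x; ring

lemma Xl_eq (j k : ℕ) : Xl j k = (1 / 2) * G (j + 1) k + (j : ℝ) * G (j - 1) k := by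
  unfold Xl G
  have h : ∀ x : ℝ, x * hermitePoly j x * hermitePoly k x * Real.exp (-x ^ 2) =
      (1 / 2) * (hermitePoly (j + 1) x * hermitePoly k x * Real.exp (-x ^ 2)) +
      (j : ℝ) * (hermitePoly (j - 1) x * hermitePoly k x * Real.exp (-x ^ 2)) := by
    intro x
    rw [hermitePoly_recur j x]; ring
  rw [MeasureTheory.integral_congr_ae (Filter.Eventually.of_forall h),
    integral_add ((integrable_hh (j+1) k).const_mul _) ((integrable_hh (j-1) k).const_mul _),
    integral_const_mul, integral_const_mul]

lemma hasDerivAt_gauss (x : ℝ) :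
    HasDerivAt (fun y : ℝ => Real.exp (-y ^ 2)) (-(2 * x) * Real.exp (-x ^ 2)) x := by
  have h1 : HasDerivAt (fun y : ℝ => -y ^ 2) (-(2 * x)) x := by
    simpa using (hasDerivAt_pow 2 x).fun_neg
  simpa [mul_comm] using h1.exp

lemma key_rel (j k : ℕ) :
    2 * (j : ℝ) * G (j - 1) k + 2 * (k : ℝ) * G j (k - 1) - 2 * Xl j k = 0 := by
  set f : ℝ → ℝ := fun x => hermitePoly j x * hermitePoly k x * Real.exp (-x ^ 2) with hf
  set f' : ℝ → ℝ := fun x =>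
    2 * (j : ℝ) * (hermitePoly (j - 1) x * hermitePoly k x * Real.exp (-x ^ 2)) +
    2 * (k : ℝ) * (hermitePoly j x * hermitePoly (k - 1) x * Real.exp (-x ^ 2)) -
    2 * (x * hermitePoly j x * hermitePoly k x * Real.exp (-x ^ 2)) with hf'
  have hd : ∀ x, HasDerivAt f (f' x) x := by
    intro x
    have hjk := (hasDerivAt_hermitePoly j x).mul (hasDerivAt_hermitePoly k x)
    have h := hjk.mul (hasDerivAt_gauss x)
    convert h using 1
    · rfl
    · rfl
    · rfl
    simp only [hf', Pi.mul_apply]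
    ring
  have hint' : Integrable f' := by
    apply Integrable.sub
    · exact (((integrable_hh (j-1) k).const_mul _).add ((integrable_hh j (k-1)).const_mul _))
    · exact (integrable_xhh j k).const_mul _
  have h0 : ∫ x, f' x = 0 :=
    integral_eq_zero_of_hasDerivAt_of_integrable hd hint' (integrable_hh j k)
  rw [hf'] at h0
  beta_reduce at h0
  have i1 : Integrable (fun x : ℝ =>
      2 * (j : ℝ) * (hermitePoly (j - 1) x * hermitePoly k x * Real.exp (-x ^ 2))) :=
    (integrable_hh (j-1) k).const_mul _
  have i2 : Integrable (fun x : ℝ =>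
      2 * (k : ℝ) * (hermitePoly j x * hermitePoly (k - 1) x * Real.exp (-x ^ 2))) :=
    (integrable_hh j (k-1)).const_mul _
  have i3 : Integrable (fun x : ℝ =>
      2 * (x * hermitePoly j x * hermitePoly k x * Real.exp (-x ^ 2))) :=
    (integrable_xhh j k).const_mul _
  have i12 : Integrable (fun x : ℝ =>
      2 * (j : ℝ) * (hermitePoly (j - 1) x * hermitePoly k x * Real.exp (-x ^ 2)) +
      2 * (k : ℝ) * (hermitePoly j x * hermitePoly (k - 1) x * Real.exp (-x ^ 2))) := i1.add i2
  rw [integral_sub i12 i3, integral_add i1 i2,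
    integral_const_mul, integral_const_mul, integral_const_mul] at h0
  unfold G Xl
  linarith [h0]

lemma G_succ (j k : ℕ) : G (j + 1) k = 2 * (k : ℝ) * G j (k - 1) := by
  have h1 := key_rel j k
  have h2 := Xl_eq j k
  rw [h2] at h1
  linarith

lemma G_eq (j k : ℕ) : G j k =
    if j = k then 2 ^ k * (Nat.factorial k : ℝ) * Real.sqrt Real.pi else 0 := by
  induction j generalizing k with
  | zero =>
    match k with
    | 0 =>
      simp only [if_pos rfl]
      unfold G
      have : ∀ x : ℝ, hermitePoly 0 x * hermitePoly 0 x * Real.exp (-x ^ 2) =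
          Real.exp (-1 * x ^ 2) := by intro x; simp [hermitePoly]
      rw [MeasureTheory.integral_congr_ae (Filter.Eventually.of_forall this),
        integral_gaussian]
      norm_num
    | k + 1 =>
      rw [G_symm, G_succ]
      simp
  | succ j ih =>
    match k with
    | 0 =>
      rw [G_succ]
      simp
    | k + 1 =>
      rw [G_succ]
      simp only [Nat.add_sub_cancel]
      rw [ih k]
      by_cases h : j = k
      · subst h
        rw [if_pos rfl, if_pos rfl]
        push_cast [Nat.factorial_succ]
        ring
      · rw [if_neg h, if_neg (by omega)]
        ring

lemma hpi_one :
    Real.pi ^ (-(1 / 4 : ℝ)) * Real.pi ^ (-(1 / 4 : ℝ)) * Real.sqrt Real.pi = 1 := by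
  rw [Real.sqrt_eq_rpow, ← Real.rpow_add Real.pi_pos, ← Real.rpow_add Real.pi_pos]
  norm_num

lemma sqrt_arith (k : ℕ) :
    (Real.sqrt (2 ^ (k + 1) * Nat.factorial (k + 1)))⁻¹ *
      (Real.sqrt (2 ^ k * Nat.factorial k))⁻¹ *
      (((k : ℝ) + 1) * (2 ^ k * Nat.factorial k)) = Real.sqrt (((k : ℝ) + 1) / 2) := by
  set a : ℝ := 2 ^ k * Nat.factorial k with ha_def
  have ha : 0 < a := by positivity
  have h2 : ((2 : ℝ) ^ (k + 1) * Nat.factorial (k + 1)) = (2 * ((k : ℝ) + 1)) * a := by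
    rw [ha_def]; push_cast [Nat.factorial_succ]; ring
  rw [h2, Real.sqrt_mul (by positivity)]
  have hrhs : Real.sqrt (((k : ℝ) + 1) / 2) = ((k : ℝ) + 1) / Real.sqrt (2 * ((k : ℝ) + 1)) := by
    rw [show ((k : ℝ) + 1) / 2 = (((k : ℝ) + 1) ^ 2) / (2 * ((k : ℝ) + 1)) by
        field_simp,
      Real.sqrt_div (by positivity), Real.sqrt_sq (by positivity)]
  rw [hrhs]
  have hs : Real.sqrt a * Real.sqrt a = a := Real.mul_self_sqrt ha.le
  have h2p : (0 : ℝ) < Real.sqrt (2 * ((k : ℝ) + 1)) := Real.sqrt_pos.2 (by positivity)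
  have hap : (0 : ℝ) < Real.sqrt a := Real.sqrt_pos.2 ha
  field_simp
  have hs' : Real.sqrt a * Real.sqrt a = 2 ^ k * (Nat.factorial k : ℝ) := hs.trans ha_def
  linear_combination (-1 : ℝ) * hs'


/-- Matrix elements of the position operator in the Hermite basis:
`∫ x·φ_j(x)·φ_k(x) dx = √((k+1)/2)` if `j = k+1`, `√(k/2)` if `j = k−1` (i.e. `k = j+1`),
and `0` otherwise. -/
theorem hermiteFun_position_matrix_element (j k : ℕ) :
    ∫ x : ℝ, x * hermiteFun j x * hermiteFun k x =
      if j = k + 1 then Real.sqrt (((k : ℝ) + 1) / 2)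
      else if k = j + 1 then Real.sqrt ((k : ℝ) / 2)
      else 0 := by
  set C : ℝ := Real.pi ^ (-(1 / 4 : ℝ)) * (Real.sqrt (2 ^ j * Nat.factorial j))⁻¹ *
      (Real.pi ^ (-(1 / 4 : ℝ)) * (Real.sqrt (2 ^ k * Nat.factorial k))⁻¹) with hC
  have hmain : ∀ x : ℝ, x * hermiteFun j x * hermiteFun k x =
      C * (x * hermitePoly j x * hermitePoly k x * Real.exp (-x ^ 2)) := by
    intro x
    have hexp : Real.exp (-x ^ 2 / 2) * Real.exp (-x ^ 2 / 2) = Real.exp (-x ^ 2) := by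
      rw [← Real.exp_add]; norm_num
    calc x * hermiteFun j x * hermiteFun k x
        = C * (x * hermitePoly j x * hermitePoly k x *
            (Real.exp (-x ^ 2 / 2) * Real.exp (-x ^ 2 / 2))) := by
          unfold hermiteFun; rw [hC]; ring
      _ = C * (x * hermitePoly j x * hermitePoly k x * Real.exp (-x ^ 2)) := by rw [hexp]
  simp only [hmain]
  rw [integral_const_mul]
  rw [show (∫ x : ℝ, x * hermitePoly j x * hermitePoly k x * Real.exp (-x ^ 2)) = Xl j k
      from rfl]
  rw [Xl_eq, G_eq, G_eq]
  by_cases h1 : j = k + 1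
  · subst h1
    rw [if_pos rfl]
    rw [if_neg (by omega), if_pos (by omega)]
    have harith := sqrt_arith k
    have hpi := hpi_one
    rw [hC]
    push_cast [Nat.add_sub_cancel]
    linear_combination
      (Real.pi ^ (-(1 / 4 : ℝ)) * Real.pi ^ (-(1 / 4 : ℝ)) * Real.sqrt Real.pi) * harith +
      (Real.sqrt (((k:ℝ) + 1) / 2)) * hpi
  · rw [if_neg h1]
    by_cases h2 : k = j + 1
    · subst h2
      rw [if_pos rfl]
      rw [if_pos rfl, if_neg (by omega)]
      have harith := sqrt_arith j
      have hpi := hpi_one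
      have hfac : ((Nat.factorial (j + 1) : ℝ)) = ((j : ℝ) + 1) * Nat.factorial j := by
        push_cast [Nat.factorial_succ]; ring
      rw [hC]
      push_cast
      linear_combination
        (Real.pi ^ (-(1 / 4 : ℝ)) * Real.pi ^ (-(1 / 4 : ℝ)) * Real.sqrt Real.pi) * harith +
        (Real.sqrt (((j:ℝ) + 1) / 2)) * hpi +
        (Real.pi ^ (-(1 / 4 : ℝ)) * (Real.sqrt (2 ^ j * Nat.factorial j))⁻¹ *
          (Real.pi ^ (-(1 / 4 : ℝ)) * (Real.sqrt (2 ^ (j+1) * Nat.factorial (j+1)))⁻¹) *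
          2 ^ j * Real.sqrt Real.pi) * hfac
    · rw [if_neg h2]
      rw [if_neg (by omega)]
      rcases Nat.eq_zero_or_pos j with hj | hj
      · subst hj; simp
      · rw [if_neg (by omega)]
        ring
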